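/- For integers n ≥ 1 and m ≥ 0 and real Y ≥ 1, the integral of (log(Y/(x₁⋯xₙ)))^m · dx₁⋯dxₙ/(x₁⋯xₙ) over the region {x₁,…,xₙ ≥ 1 : x₁⋯xₙ ≤ Y} equals (m!/(m+n)!)·(log Y)^{m+n}. -/

import Mathlib

open MeasureTheory Real

lemma one_le_prod_real {ι : Type*} {s : Finset ι} {f : ι → ℝ} (h : ∀ i ∈ s, 1 ≤ f i) :
    1 ≤ ∏ i ∈ s, f i := by
  calc (1:ℝ) = ∏ _i ∈ s, 1 := by simp
    _ ≤ ∏ i ∈ s, f i := Finset.prod_le_prod (by intros; norm_num) h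

lemma measurable_prod_coords (n : ℕ) : Measurable fun x : Fin n → ℝ => ∏ i, x i :=
  Finset.measurable_prod Finset.univ (f := fun i => fun x : Fin n → ℝ => x i)
    (fun i _ => measurable_pi_apply i)

lemma measurableSet_region (n : ℕ) (Y : ℝ) :
    MeasurableSet {x : Fin n → ℝ | (∀ i, 1 ≤ x i) ∧ ∏ i, x i ≤ Y} := by
  have h1 : MeasurableSet {x : Fin n → ℝ | ∀ i, 1 ≤ x i} := by
    rw [Set.setOf_forall]
    exact MeasurableSet.iInter fun i =>
      measurableSet_le measurable_const (measurable_pi_apply i)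
  have h2 : MeasurableSet {x : Fin n → ℝ | ∏ i, x i ≤ Y} :=
    measurableSet_le (measurable_prod_coords n) measurable_const
  exact h1.inter h2

lemma integrableOn_region (n m : ℕ) (Y : ℝ) (hY : 1 ≤ Y) :
    IntegrableOn (fun x : Fin n → ℝ => (Real.log (Y / ∏ i, x i)) ^ m / ∏ i, x i)
      {x : Fin n → ℝ | (∀ i, 1 ≤ x i) ∧ ∏ i, x i ≤ Y} := by
  set S := {x : Fin n → ℝ | (∀ i, 1 ≤ x i) ∧ ∏ i, x i ≤ Y} with hSdef
  have hS := measurableSet_region n Y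
  have hsub : S ⊆ Set.pi Set.univ (fun _ : Fin n => Set.Icc 1 Y) := by
    intro x hx i _
    have herase : (1:ℝ) ≤ ∏ j ∈ Finset.univ.erase i, x j :=
      one_le_prod_real fun j _ => hx.1 j
    refine ⟨hx.1 i, ?_⟩
    calc x i ≤ x i * ∏ j ∈ Finset.univ.erase i, x j := by
          apply le_mul_of_one_le_right (by linarith [hx.1 i]) herase
      _ = ∏ j, x j := Finset.mul_prod_erase _ _ (Finset.mem_univ i)
      _ ≤ Y := hx.2
  have hfin : volume S ≠ ⊤ := by
    refine ne_top_of_le_ne_top ?_ (measure_mono hsub)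
    rw [volume_pi_pi]
    exact (ENNReal.prod_lt_top fun i _ => (by simp : volume (Set.Icc (1:ℝ) Y) < ⊤)).ne
  have hmeas : Measurable (fun x : Fin n → ℝ => (Real.log (Y / ∏ i, x i)) ^ m / ∏ i, x i) :=
    (((measurable_const.div (measurable_prod_coords n)).log).pow_const m).div
      (measurable_prod_coords n)
  apply Measure.integrableOn_of_bounded hfin hmeas.aestronglyMeasurable (M := (Real.log Y) ^ m)
  rw [ae_restrict_iff' hS]
  filter_upwards with x hx
  have h1 : (1:ℝ) ≤ ∏ i, x i := one_le_prod_real fun i _ => hx.1 i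
  have h0 : (0:ℝ) < ∏ i, x i := lt_of_lt_of_le one_pos h1
  have hlog0 : 0 ≤ Real.log (Y / ∏ i, x i) :=
    Real.log_nonneg ((one_le_div h0).2 hx.2)
  have hlogle : Real.log (Y / ∏ i, x i) ≤ Real.log Y := by
    apply Real.log_le_log (by positivity)
    calc Y / ∏ i, x i ≤ Y / 1 :=
          div_le_div_of_nonneg_left (by linarith) one_pos h1
      _ = Y := div_one Y
  rw [Real.norm_eq_abs, abs_div, abs_of_nonneg (le_of_lt h0), abs_of_nonneg (pow_nonneg hlog0 m)]
  calc (Real.log (Y / ∏ i, x i)) ^ m / ∏ i, x i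
      ≤ (Real.log (Y / ∏ i, x i)) ^ m / 1 :=
        div_le_div_of_nonneg_left (pow_nonneg hlog0 m) one_pos h1
    _ = (Real.log (Y / ∏ i, x i)) ^ m := div_one _
    _ ≤ (Real.log Y) ^ m := pow_le_pow_left₀ hlog0 hlogle m


lemma one_var (k : ℕ) (Y : ℝ) (hY : 1 ≤ Y) :
    ∫ t in Set.Ioc 1 Y, (Real.log (Y / t)) ^ k / t
      = (Real.log Y) ^ (k + 1) / (k + 1) := by
  have hY0 : (0:ℝ) < Y := lt_of_lt_of_le one_pos hY
  rw [← intervalIntegral.integral_of_le hY]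
  have hderiv : ∀ t ∈ Set.uIcc (1:ℝ) Y,
      HasDerivAt (fun t => -((Real.log Y - Real.log t) ^ (k+1)) / (k+1))
        ((Real.log (Y / t)) ^ k / t) t := by
    intro t ht
    rw [Set.uIcc_of_le hY] at ht
    have ht0 : (0:ℝ) < t := lt_of_lt_of_le one_pos ht.1
    have h1 : HasDerivAt (fun t => Real.log Y - Real.log t) (-(1/t)) t := by
      simpa using ((Real.hasDerivAt_log (ne_of_gt ht0)).const_sub (Real.log Y))
    have h2 := (h1.pow (k+1)).neg.div_const ((k:ℝ)+1)
    convert h2 using 1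
    · rfl
    · rfl
    · rfl
    rw [Real.log_div (ne_of_gt hY0) (ne_of_gt ht0)]
    push_cast [Nat.add_sub_cancel]
    field_simp
  have hint : IntervalIntegrable (fun t => (Real.log (Y / t)) ^ k / t) volume 1 Y := by
    apply ContinuousOn.intervalIntegrable
    have hpos : ∀ x ∈ Set.uIcc (1:ℝ) Y, x ≠ 0 := by
      intro x hx
      rw [Set.uIcc_of_le hY] at hx
      exact ne_of_gt (lt_of_lt_of_le one_pos hx.1)
    exact (((continuousOn_const.div continuousOn_id hpos).log (by
      intro x hx
      exact div_ne_zero (ne_of_gt hY0) (hpos x hx))).pow k).div continuousOn_id hpos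
  rw [intervalIntegral.integral_eq_sub_of_hasDerivAt hderiv hint]
  simp [Real.log_one]
  field_simp


lemma aux_base (m : ℕ) (Y : ℝ) (hY : 1 ≤ Y) :
    ∫ x in {x : Fin 0 → ℝ | (∀ i, 1 ≤ x i) ∧ ∏ i, x i ≤ Y},
      (Real.log (Y / ∏ i, x i)) ^ m / ∏ i, x i
    = (Nat.factorial m : ℝ) / (Nat.factorial (m + 0)) * Real.log Y ^ (m + 0) := by
  have hset : {x : Fin 0 → ℝ | (∀ i, 1 ≤ x i) ∧ ∏ i, x i ≤ Y} = Set.univ := by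
    ext x
    simp [Finset.univ_eq_empty, hY]
  have h1 : (volume (Set.univ : Set (Fin 0 → ℝ))) = 1 := by
    simp [MeasureTheory.volume_pi, Measure.pi_univ]
  have h2 : ((Nat.factorial m : ℝ)) / ((Nat.factorial m : ℝ)) = 1 := by
    apply div_self
    exact_mod_cast Nat.factorial_ne_zero m
  rw [hset]
  simp [Finset.univ_eq_empty, h1, h2, Measure.real]

lemma aux (m n : ℕ) : ∀ (Y : ℝ), 1 ≤ Y →
    ∫ x in {x : Fin n → ℝ | (∀ i, 1 ≤ x i) ∧ ∏ i, x i ≤ Y},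
      (Real.log (Y / ∏ i, x i)) ^ m / ∏ i, x i
    = (Nat.factorial m : ℝ) / (Nat.factorial (m + n)) * Real.log Y ^ (m + n) := by
  induction n with
  | zero => exact fun Y hY => aux_base m Y hY
  | succ n ih =>
    intro Y hY
    have hY0 : (0:ℝ) < Y := lt_of_lt_of_le one_pos hY
    set S := {x : Fin (n+1) → ℝ | (∀ i, 1 ≤ x i) ∧ ∏ i, x i ≤ Y} with hSdef
    set f : (Fin (n+1) → ℝ) → ℝ :=
      fun x => (Real.log (Y / ∏ i, x i)) ^ m / ∏ i, x i with hfdef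
    have hS : MeasurableSet S := measurableSet_region (n+1) Y
    have hIntOn : IntegrableOn f S := integrableOn_region (n+1) m Y hY
    have hIntG : Integrable (S.indicator f) := (integrable_indicator_iff hS).2 hIntOn
    rw [← integral_indicator hS]
    have hmp := (measurePreserving_piFinSuccAbove (fun _ : Fin (n+1) => (volume : Measure ℝ)) 0).symm
    rw [volume_pi, ← hmp.integral_comp (MeasurableEquiv.measurableEmbedding _)]
    rw [volume_pi] at hIntG
    have hIntG2 : Integrable ((S.indicator f) ∘
        (MeasurableEquiv.piFinSuccAbove (fun _ : Fin (n+1) => ℝ) 0).symm)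
        ((volume : Measure ℝ).prod (Measure.pi fun _ : Fin n => volume)) :=
      (hmp.integrable_comp_emb (MeasurableEquiv.measurableEmbedding _)).2 hIntG
    have hfub := MeasureTheory.integral_prod _ hIntG2
    simp only [Function.comp] at hfub
    rw [hfub]
    have hsymm : ∀ (t : ℝ) (y : Fin n → ℝ),
        (MeasurableEquiv.piFinSuccAbove (fun _ : Fin (n+1) => ℝ) 0).symm (t, y)
          = Fin.cons t y := by
      intro t y
      simp [MeasurableEquiv.piFinSuccAbove_symm_apply, Fin.insertNthEquiv,
        Fin.insertNth_zero']
    have hinner : ∀ t : ℝ,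
        (∫ y : Fin n → ℝ, S.indicator f
          ((MeasurableEquiv.piFinSuccAbove (fun _ : Fin (n+1) => ℝ) 0).symm (t, y))
          ∂(Measure.pi fun _ : Fin n => volume))
        = Set.indicator (Set.Icc 1 Y)
            (fun t => (Nat.factorial m : ℝ) / (Nat.factorial (m + n)) *
              (Real.log (Y / t) ^ (m + n)) / t) t := by
      intro t
      simp_rw [hsymm t]
      by_cases ht : t ∈ Set.Icc (1:ℝ) Y
      · obtain ⟨h1t, htY⟩ := Set.mem_Icc.1 ht
        have ht0 : (0:ℝ) < t := lt_of_lt_of_le one_pos h1t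
        have hY' : 1 ≤ Y / t := (one_le_div ht0).2 htY
        have hkey : ∀ y : Fin n → ℝ, S.indicator f (Fin.cons t y) =
            Set.indicator {y : Fin n → ℝ | (∀ i, 1 ≤ y i) ∧ ∏ i, y i ≤ Y / t}
              (fun y => ((Real.log ((Y/t) / ∏ i, y i)) ^ m / ∏ i, y i) / t) y := by
          intro y
          have hprod : (∏ i, Fin.cons t y i) = t * ∏ i, y i := by
            rw [Fin.prod_univ_succ]
            simp
          have hval : f (Fin.cons t y)
              = ((Real.log ((Y/t) / ∏ i, y i)) ^ m / ∏ i, y i) / t := by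
            show (Real.log (Y / ∏ i, Fin.cons t y i)) ^ m / ∏ i, Fin.cons t y i
              = ((Real.log ((Y/t) / ∏ i, y i)) ^ m / ∏ i, y i) / t
            rw [hprod, div_div Y t (∏ i, y i), div_div _ (∏ i, y i) t, mul_comm (∏ i, y i) t]
          have hmem : (Fin.cons t y ∈ S)
              ↔ y ∈ {y : Fin n → ℝ | (∀ i, 1 ≤ y i) ∧ ∏ i, y i ≤ Y / t} := by
            simp only [hSdef, Set.mem_setOf_eq, Fin.forall_fin_succ, Fin.cons_zero,
              Fin.cons_succ, hprod]
            constructor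
            · rintro ⟨⟨_, hy⟩, hle⟩
              refine ⟨hy, (le_div_iff₀ ht0).2 ?_⟩
              rw [mul_comm]
              exact hle
            · rintro ⟨hy, hle⟩
              refine ⟨⟨h1t, hy⟩, ?_⟩
              rw [mul_comm]
              exact (le_div_iff₀ ht0).1 hle
          by_cases hy : y ∈ {y : Fin n → ℝ | (∀ i, 1 ≤ y i) ∧ ∏ i, y i ≤ Y / t}
          · rw [Set.indicator_of_mem (hmem.2 hy), Set.indicator_of_mem hy, hval]
          · rw [Set.indicator_of_notMem (fun h => hy (hmem.1 h)),
              Set.indicator_of_notMem hy]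
        simp_rw [hkey]
        rw [integral_indicator (measurableSet_region n (Y/t))]
        rw [← volume_pi]
        rw [MeasureTheory.integral_div t, ih (Y/t) hY']
        rw [Set.indicator_of_mem ht]
      · have hzero : ∀ y : Fin n → ℝ, S.indicator f (Fin.cons t y) = 0 := by
          intro y
          apply Set.indicator_of_notMem
          intro hmem
          apply ht
          have h1t : (1:ℝ) ≤ t := by
            have := hmem.1 0
            rwa [Fin.cons_zero] at this
          have hys : ∀ i, (1:ℝ) ≤ y i := by
            intro i
            have := hmem.1 i.succ
            rwa [Fin.cons_succ] at this
          have hprod : (∏ i, Fin.cons t y i) = t * ∏ i, y i := by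
            rw [Fin.prod_univ_succ]
            simp
          have h2 : t * ∏ i, y i ≤ Y := by
            rw [← hprod]
            exact hmem.2
          have htY : t ≤ Y := by
            refine le_trans ?_ h2
            apply le_mul_of_one_le_right (by linarith)
            exact one_le_prod_real fun i _ => hys i
          exact Set.mem_Icc.2 ⟨h1t, htY⟩
        simp_rw [hzero]
        rw [integral_zero, Set.indicator_of_notMem ht]
    calc (∫ t : ℝ, ∫ y : Fin n → ℝ, S.indicator f
          ((MeasurableEquiv.piFinSuccAbove (fun _ : Fin (n+1) => ℝ) 0).symm (t, y))
          ∂(Measure.pi fun _ : Fin n => volume)) 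
        = ∫ t : ℝ, Set.indicator (Set.Icc 1 Y)
            (fun t => (Nat.factorial m : ℝ) / (Nat.factorial (m + n)) *
              (Real.log (Y / t) ^ (m + n)) / t) t := by
          exact integral_congr_ae (Filter.Eventually.of_forall hinner)
      _ = ∫ t in Set.Icc 1 Y, (Nat.factorial m : ℝ) / (Nat.factorial (m + n)) *
              (Real.log (Y / t) ^ (m + n)) / t := integral_indicator measurableSet_Icc
      _ = ∫ t in Set.Ioc 1 Y, (Nat.factorial m : ℝ) / (Nat.factorial (m + n)) *
              (Real.log (Y / t) ^ (m + n)) / t := integral_Icc_eq_integral_Ioc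
      _ = ∫ t in Set.Ioc 1 Y, (Nat.factorial m : ℝ) / (Nat.factorial (m + n)) *
              ((Real.log (Y / t) ^ (m + n)) / t) := by
          congr 1; ext t; ring
      _ = (Nat.factorial m : ℝ) / (Nat.factorial (m + n)) *
            ∫ t in Set.Ioc 1 Y, (Real.log (Y / t) ^ (m + n)) / t :=
          MeasureTheory.integral_const_mul _ _
      _ = (Nat.factorial m : ℝ) / (Nat.factorial (m + n)) *
            ((Real.log Y) ^ (m + n + 1) / (m + n + 1)) := by
          rw [one_var (m + n) Y hY]
          push_cast
          ring
      _ = (Nat.factorial m : ℝ) / (Nat.factorial (m + (n+1))) * Real.log Y ^ (m + (n+1)) := by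
          have h1 : m + (n + 1) = (m + n) + 1 := by ring
          rw [h1, Nat.factorial_succ]
          have h2 : ((Nat.factorial (m+n) : ℝ)) ≠ 0 := by
            exact_mod_cast Nat.factorial_ne_zero (m+n)
          have h3 : ((m : ℝ) + n + 1) ≠ 0 := by positivity
          push_cast
          field_simp

theorem integral_log_pow_over_product_region (n m : ℕ) (hn : 1 ≤ n) (Y : ℝ) (hY : 1 ≤ Y) :
    ∫ x in {x : Fin n → ℝ | (∀ i, 1 ≤ x i) ∧ ∏ i, x i ≤ Y},
      (Real.log (Y / ∏ i, x i)) ^ m / ∏ i, x i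
    = (Nat.factorial m : ℝ) / (Nat.factorial (m + n)) * Real.log Y ^ (m + n) := by
  exact aux m n Y hY
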